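/- Let G be a simple graph on n ≥ 5 vertices with positive degrees and α real. Then for any four distinct vertices with degrees d_j, d_k, d_ℓ, d_m: Z_{2α}(G) ≥ d_ℓ^{2α} + d_m^{2α} + (Z_α(G) − d_ℓ^α − d_m^α)²/(n−2) + (1/2)(d_j^α − d_k^α)² + (2(n−2)/(n−4))·((Z_α(G) − d_ℓ^α − d_m^α)/(n−2) − (d_j^α + d_k^α)/2)². -/
import Mathlib


open Finset

theorem stmt11 {V : Type*} [Fintype V] [DecidableEq V] (G : SimpleGraph V)
    [DecidableRel G.Adj] (hn : 5 ≤ Fintype.card V)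
    (hdeg : ∀ v : V, 0 < G.degree v) (α : ℝ) (j k l w : V)
    (hjk : j ≠ k) (hjl : j ≠ l) (hjw : j ≠ w) (hkl : k ≠ l) (hkw : k ≠ w)
    (hlw : l ≠ w) :
    ∑ v : V, (G.degree v : ℝ) ^ (2 * α) ≥
      (G.degree l : ℝ) ^ (2 * α) + (G.degree w : ℝ) ^ (2 * α)
      + ((∑ v : V, (G.degree v : ℝ) ^ α) - (G.degree l : ℝ) ^ α
            - (G.degree w : ℝ) ^ α) ^ 2 / ((Fintype.card V : ℝ) - 2)
      + (1 / 2) * ((G.degree j : ℝ) ^ α - (G.degree k : ℝ) ^ α) ^ 2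
      + (2 * ((Fintype.card V : ℝ) - 2) / ((Fintype.card V : ℝ) - 4)) *
          (((∑ v : V, (G.degree v : ℝ) ^ α) - (G.degree l : ℝ) ^ α
                - (G.degree w : ℝ) ^ α) / ((Fintype.card V : ℝ) - 2)
            - ((G.degree j : ℝ) ^ α + (G.degree k : ℝ) ^ α) / 2) ^ 2 := by
  set f : V → ℝ := fun v => (G.degree v : ℝ) ^ α with hf
  have hfpos : ∀ v, 0 < f v := fun v =>
    Real.rpow_pos_of_pos (by exact_mod_cast hdeg v) α
  have hsq : ∀ v : V, (G.degree v : ℝ) ^ (2 * α) = f v ^ 2 := by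
    intro v
    rw [hf, mul_comm, Real.rpow_mul (by positivity), Real.rpow_two]
  simp only [hsq]
  -- set of the four special vertices
  set t : Finset V := {j, k, l, w} with ht
  have hcardt : t.card = 4 := by
    rw [ht]
    rw [Finset.card_insert_of_notMem (by simp [hjk, hjl, hjw]),
      Finset.card_insert_of_notMem (by simp [hkl, hkw]),
      Finset.card_insert_of_notMem (by simp [hlw]), Finset.card_singleton]
  set s : Finset V := Finset.univ \ t with hs
  have hcards : (s.card : ℝ) = (Fintype.card V : ℝ) - 4 := by
    rw [hs, Finset.card_sdiff_of_subset (Finset.subset_univ t), Finset.card_univ, hcardt]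
    have : 4 ≤ Fintype.card V := by omega
    push_cast [Nat.cast_sub this]
    ring
  have hsplit : ∀ g : V → ℝ, ∑ v : V, g v = (∑ v ∈ s, g v) + (g j + g k + g l + g w) := by
    intro g
    have : ∑ v ∈ t, g v = g j + g k + g l + g w := by
      rw [ht]
      rw [Finset.sum_insert (by simp [hjk, hjl, hjw]),
        Finset.sum_insert (by simp [hkl, hkw]),
        Finset.sum_insert (by simp [hlw]), Finset.sum_singleton]
      ring
    rw [hs, Finset.sum_sdiff_eq_sub (Finset.subset_univ t), this]
    ring
  rw [hsplit f, hsplit (fun v => f v ^ 2)]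
  set P : ℝ := ∑ v ∈ s, f v with hP
  set Q : ℝ := ∑ v ∈ s, f v ^ 2 with hQ
  have hcauchy : P ^ 2 ≤ ((Fintype.card V : ℝ) - 4) * Q := by
    rw [← hcards]
    exact_mod_cast sq_sum_le_card_mul_sum_sq (s := s) (f := f)
  set n : ℝ := (Fintype.card V : ℝ) with hn'
  have hn5 : (5 : ℝ) ≤ n := by rw [hn']; exact_mod_cast hn
  have h2 : n - 2 ≠ 0 := by linarith
  have h4 : n - 4 ≠ 0 := by linarith
  have h4' : (0 : ℝ) < n - 4 := by linarith
  have hQge : P ^ 2 / (n - 4) ≤ Q := by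
    rw [div_le_iff₀ h4']
    linarith [hcauchy]
  rw [ge_iff_le, ← sub_nonneg]
  have key : Q + (f j ^ 2 + f k ^ 2 + f l ^ 2 + f w ^ 2) -
      (f l ^ 2 + f w ^ 2
        + (P + (f j + f k + f l + f w) - f l - f w) ^ 2 / (n - 2)
        + 1 / 2 * (f j - f k) ^ 2
        + 2 * (n - 2) / (n - 4) *
          ((P + (f j + f k + f l + f w) - f l - f w) / (n - 2)
            - (f j + f k) / 2) ^ 2)
      = Q - P ^ 2 / (n - 4) := by
    field_simp
    ring
  rw [key]
  linarith [hQge]
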